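/- Let S be a monoid, λ a nonzero cardinal, n ≤ λ a positive integer, and i ≤ n. Let x be the element of 𝓘_λ^n(S) with rows (a₁,…,a_i), (s₁,…,s_i), (b₁,…,b_i) and y the element with rows (c₁,…,c_i), (t₁,…,t_i), (d₁,…,d_i), both nonzero. Then x 𝓛 y in 𝓘_λ^n(S) if and only if there exists a permutation σ of {1,…,i} such that b_j = d_{σ(j)} and s_j 𝓛 t_{σ(j)} in S for all j = 1,…,i. -/
import Mathlib


open Classical

namespace ISemExt

/-- Carrier for the extension `𝓘_λ^n(S)`: an element is a function assigning to each
pair `(x,y)` of points of `lam` an optional value in `S` (its labelled graph). -/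
def Elem (lam S : Type) : Type := lam → lam → Option S

/-- The zero element (the empty map). -/
def zeroE (lam S : Type) : Elem lam S := fun _ _ => none

/-- Multiplication in `𝓘_λ^n(S)`: composition of labelled partial maps,
multiplying the labels along composable pairs. -/
noncomputable def mulE {lam S : Type} [Mul S] (f g : Elem lam S) : Elem lam S :=
  fun x z =>
    if h : ∃ y s t, f x y = some s ∧ g y z = some t then
      some (h.choose_spec.choose * h.choose_spec.choose_spec.choose)
    else none

/-- The graph of an element. -/
def graphOf {lam S : Type} (f : Elem lam S) : Set (lam × lam) :=
  {p | (f p.1 p.2).isSome}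

/-- `Valid n f` says that `f` is an element of `𝓘_λ^n(S)`: it is a partial
injective labelled map (in both directions) of rank at most `n`. -/
def Valid {lam S : Type} (n : ℕ) (f : Elem lam S) : Prop :=
  (∀ ⦃x y₁ y₂⦄, (f x y₁).isSome → (f x y₂).isSome → y₁ = y₂) ∧
  (∀ ⦃x₁ x₂ y⦄, (f x₁ y).isSome → (f x₂ y).isSome → x₁ = x₂) ∧
  (graphOf f).Finite ∧ (graphOf f).ncard ≤ n

/-- The element with rows `(a₁,…,a_i)`, `(s₁,…,s_i)`, `(b₁,…,b_i)`. -/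
noncomputable def mk3 {lam S : Type} {i : ℕ} (a : Fin i → lam) (s : Fin i → S)
    (b : Fin i → lam) : Elem lam S :=
  fun x y => if h : ∃ j, a j = x ∧ b j = y then some (s h.choose) else none

/-- Green's relation `𝓛` in the monoid `S`. -/
def GreenLS {S : Type} [Monoid S] (x y : S) : Prop :=
  (∃ u, x = u * y) ∧ (∃ v, y = v * x)

/-- Green's relation `𝓛` in the semigroup `𝓘_λ^n(S)` (with identity adjoined). -/
def GreenLI {lam S : Type} [Mul S] (n : ℕ) (f g : Elem lam S) : Prop :=
  (f = g ∨ ∃ u : Elem lam S, Valid n u ∧ f = mulE u g) ∧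
  (g = f ∨ ∃ v : Elem lam S, Valid n v ∧ g = mulE v f)

section Helpers

variable {lam S : Type} {i n : ℕ}

lemma mk3_apply_of {a b : Fin i → lam} {s : Fin i → S} (ha : Function.Injective a)
    (j : Fin i) : mk3 a s b (a j) (b j) = some (s j) := by
  have h : ∃ k, a k = a j ∧ b k = b j := ⟨j, rfl, rfl⟩
  unfold mk3
  rw [dif_pos h]
  exact congrArg some (congrArg s (ha h.choose_spec.1))

lemma mk3_eq_some {a b : Fin i → lam} {s : Fin i → S} {x y : lam} {w : S}
    (h : mk3 a s b x y = some w) : ∃ j, a j = x ∧ b j = y ∧ s j = w := by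
  unfold mk3 at h
  by_cases hex : ∃ j, a j = x ∧ b j = y
  · rw [dif_pos hex] at h
    exact ⟨hex.choose, hex.choose_spec.1, hex.choose_spec.2, Option.some_injective _ h⟩
  · rw [dif_neg hex] at h; cases h

lemma mk3_eq_none {a b : Fin i → lam} {s : Fin i → S} {x y : lam}
    (h : ¬ ∃ j, a j = x ∧ b j = y) : mk3 a s b x y = none := by
  unfold mk3; rw [dif_neg h]

lemma mulE_eq_some [Mul S] {f g : Elem lam S} {x z : lam} {w : S}
    (hex : ∃ y s t, f x y = some s ∧ g y z = some t)
    (huniq : ∀ y s t, f x y = some s → g y z = some t → s * t = w) :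
    mulE f g x z = some w := by
  unfold mulE
  rw [dif_pos hex]
  exact congrArg some (huniq _ _ _ hex.choose_spec.choose_spec.choose_spec.1
    hex.choose_spec.choose_spec.choose_spec.2)

lemma mulE_eq_none [Mul S] {f g : Elem lam S} {x z : lam}
    (h : ¬ ∃ y s t, f x y = some s ∧ g y z = some t) : mulE f g x z = none := by
  unfold mulE; rw [dif_neg h]

lemma of_mulE_eq_some [Mul S] {f g : Elem lam S} {x z : lam} {w : S}
    (h : mulE f g x z = some w) :
    ∃ y s t, f x y = some s ∧ g y z = some t ∧ s * t = w := by
  unfold mulE at h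
  by_cases hex : ∃ y s t, f x y = some s ∧ g y z = some t
  · rw [dif_pos hex] at h
    exact ⟨hex.choose, hex.choose_spec.choose, hex.choose_spec.choose_spec.choose,
      hex.choose_spec.choose_spec.choose_spec.1,
      hex.choose_spec.choose_spec.choose_spec.2, Option.some_injective _ h⟩
  · rw [dif_neg hex] at h; cases h

lemma mulE_mk3_mk3 [Mul S] {a e b : Fin i → lam} {u t : Fin i → S}
    (ha : Function.Injective a) (he : Function.Injective e) :
    mulE (mk3 a u e) (mk3 e t b) = mk3 a (fun j => u j * t j) b := by
  funext x z
  by_cases hex : ∃ j, a j = x ∧ b j = z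
  · obtain ⟨j, rfl, rfl⟩ := hex
    rw [mk3_apply_of ha j]
    apply mulE_eq_some
    · exact ⟨e j, u j, t j, mk3_apply_of ha j, mk3_apply_of he j⟩
    · intro y s' t' h1 h2
      obtain ⟨k, hk1, hk2, hk3⟩ := mk3_eq_some h1
      obtain ⟨m, hm1, hm2, hm3⟩ := mk3_eq_some h2
      have hkj : k = j := ha hk1
      subst hkj
      have hmk : m = k := he (hm1.trans hk2.symm)
      subst hmk
      rw [← hk3, ← hm3]
  · rw [mk3_eq_none hex]
    apply mulE_eq_none
    rintro ⟨y, s', t', h1, h2⟩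
    obtain ⟨k, hk1, hk2, _⟩ := mk3_eq_some h1
    obtain ⟨m, hm1, hm2, _⟩ := mk3_eq_some h2
    have : m = k := he (hm1.trans hk2.symm)
    subst this
    exact hex ⟨m, hk1, hm2⟩

lemma mk3_reindex {c d : Fin i → lam} {t : Fin i → S}
    (hc : Function.Injective c) (σ : Equiv.Perm (Fin i)) :
    mk3 (c ∘ σ) (t ∘ σ) (d ∘ σ) = mk3 c t d := by
  funext x z
  by_cases hex : ∃ j, c j = x ∧ d j = z
  · obtain ⟨j, rfl, rfl⟩ := hex
    rw [mk3_apply_of hc j]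
    have h2 := mk3_apply_of (b := d ∘ σ) (s := t ∘ σ)
      (hc.comp σ.injective) (σ.symm j)
    simpa using h2
  · rw [mk3_eq_none hex, mk3_eq_none (by rintro ⟨j, h1, h2⟩; exact hex ⟨σ j, h1, h2⟩)]

lemma valid_mk3 {a b : Fin i → lam} {s : Fin i → S}
    (ha : Function.Injective a) (hb : Function.Injective b) (hin : i ≤ n) :
    Valid n (mk3 a s b) := by
  have hgr : graphOf (mk3 a s b) = Set.range (fun j => (a j, b j)) := by
    ext ⟨x, y⟩
    simp only [graphOf, Set.mem_setOf_eq, Option.isSome_iff_exists, Set.mem_range]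
    constructor
    · rintro ⟨w, hw⟩
      obtain ⟨j, hj1, hj2, _⟩ := mk3_eq_some hw
      exact ⟨j, by simp [hj1, hj2]⟩
    · rintro ⟨j, hj⟩
      obtain ⟨hj1, hj2⟩ := Prod.mk.injEq .. ▸ hj
      exact ⟨s j, by rw [← hj1, ← hj2]; exact mk3_apply_of ha j⟩
  refine ⟨?_, ?_, ?_, ?_⟩
  · intro x y₁ y₂ h1 h2
    obtain ⟨w1, hw1⟩ := Option.isSome_iff_exists.1 h1
    obtain ⟨w2, hw2⟩ := Option.isSome_iff_exists.1 h2
    obtain ⟨j, hj1, hj2, _⟩ := mk3_eq_some hw1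
    obtain ⟨k, hk1, hk2, _⟩ := mk3_eq_some hw2
    have : j = k := ha (hj1.trans hk1.symm)
    subst this
    rw [← hj2, ← hk2]
  · intro x₁ x₂ y h1 h2
    obtain ⟨w1, hw1⟩ := Option.isSome_iff_exists.1 h1
    obtain ⟨w2, hw2⟩ := Option.isSome_iff_exists.1 h2
    obtain ⟨j, hj1, hj2, _⟩ := mk3_eq_some hw1
    obtain ⟨k, hk1, hk2, _⟩ := mk3_eq_some hw2
    have : j = k := hb (hj2.trans hk2.symm)
    subst this
    rw [← hj1, ← hk1]
  · rw [hgr]; exact Set.finite_range _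
  · rw [hgr]
    calc (Set.range fun j => (a j, b j)).ncard
        = ((fun j => (a j, b j)) '' Set.univ).ncard := by rw [Set.image_univ]
      _ ≤ (Set.univ : Set (Fin i)).ncard := Set.ncard_image_le Set.finite_univ
      _ = i := by simp [Set.ncard_univ]
      _ ≤ n := hin

lemma forward_half [Monoid S] {a b c d : Fin i → lam} {s t : Fin i → S}
    (ha : Function.Injective a)
    (h : mk3 a s b = mk3 c t d ∨
      ∃ u : Elem lam S, Valid n u ∧ mk3 a s b = mulE u (mk3 c t d)) :
    ∀ j, ∃ k, b j = d k ∧ ∃ w, s j = w * t k := by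
  intro j
  rcases h with h | ⟨u, _, h⟩
  · have := mk3_apply_of (b := b) (s := s) ha j
    rw [h] at this
    obtain ⟨k, _, hk2, hk3⟩ := mk3_eq_some this
    exact ⟨k, hk2.symm, 1, by rw [hk3, one_mul]⟩
  · have hs := mk3_apply_of (b := b) (s := s) ha j
    rw [h] at hs
    obtain ⟨y, s', t', h1, h2, h3⟩ := of_mulE_eq_some hs
    obtain ⟨k, _, hk2, hk3⟩ := mk3_eq_some h2
    exact ⟨k, hk2.symm, s', by rw [hk3, h3]⟩

end Helpers

/-- Characterization of Green's relation `𝓛` on `𝓘_λ^n(S)` for a monoid `S`. -/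
theorem greenL_iff (lam S : Type) [Nonempty lam] [Monoid S]
    (n i : ℕ) (hn : 0 < n) (hcard : (n : Cardinal) ≤ Cardinal.mk lam)
    (hi : 0 < i) (hin : i ≤ n)
    (a b c d : Fin i → lam) (s t : Fin i → S)
    (ha : Function.Injective a) (hb : Function.Injective b)
    (hc : Function.Injective c) (hd : Function.Injective d) :
    GreenLI n (mk3 a s b) (mk3 c t d) ↔
      ∃ σ : Equiv.Perm (Fin i), ∀ j, b j = d (σ j) ∧ GreenLS (s j) (t (σ j)) := by
  constructor
  · rintro ⟨h1, h2⟩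
    have H1 := forward_half (n := n) ha h1
    have H2 := forward_half (n := n) hc h2
    choose τ hτ1 hτ2 using H1
    choose π hπ1 hπ2 using H2
    have hlr : ∀ j, π (τ j) = j := fun j => hb ((hπ1 (τ j)).symm.trans (hτ1 j).symm)
    have hrl : ∀ k, τ (π k) = k := fun k => hd ((hτ1 (π k)).symm.trans (hπ1 k).symm)
    refine ⟨⟨τ, π, hlr, hrl⟩, fun j => ⟨hτ1 j, hτ2 j, ?_⟩⟩
    obtain ⟨w, hw⟩ := hπ2 (τ j)
    rw [hlr j] at hw
    exact ⟨w, hw⟩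
  · rintro ⟨σ, hσ⟩
    have hbd : ∀ j, b j = d (σ j) := fun j => (hσ j).1
    choose uvals hu using fun j => (hσ j).2.1
    choose vvals hv using fun j => (hσ j).2.2
    have hbd' : d ∘ σ = b := funext fun j => (hbd j).symm
    constructor
    · right
      refine ⟨mk3 a uvals (c ∘ σ), valid_mk3 ha (hc.comp σ.injective) hin, ?_⟩
      rw [← mk3_reindex hc σ, mulE_mk3_mk3 ha (hc.comp σ.injective)]
      rw [hbd']
      have hfun : (fun j => uvals j * (t ∘ σ) j) = s := funext fun j => (hu j).symm
      rw [hfun]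
    · right
      refine ⟨mk3 (c ∘ σ) vvals a, valid_mk3 (hc.comp σ.injective) ha hin, ?_⟩
      rw [mulE_mk3_mk3 (hc.comp σ.injective) ha]
      rw [← mk3_reindex hc σ, hbd']
      have hfun : (t ∘ σ) = fun j => vvals j * s j := funext fun j => hv j
      rw [hfun]


end ISemExt
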